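/- A project-join tree yields a tree decomposition: if (T, r, γ, π) is a project-join tree of width w of a CNF formula φ, then defining χ(n) = vars(n) for leaves n and χ(n) = vars(n) ∪ π(n) for internal nodes n gives a tree decomposition (T, χ) of the Gaifman graph of φ of treewidth w − 1. -/

import Mathlib

variable {V : Type*} [DecidableEq V]

structure Clause (V : Type*) where
  pos : Finset V
  neg : Finset V

def Clause.vars [DecidableEq V] (c : Clause V) : Finset V := c.pos ∪ c.neg

noncomputable def Clause.ind [DecidableEq V] (c : Clause V) (τ : Finset V) : ℝ :=
  if (∃ x ∈ c.pos, x ∈ τ) ∨ (∃ x ∈ c.neg, x ∉ τ) then 1 else 0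

inductive PJT (V : Type*) where
  | leaf (c : Clause V)
  | node (lbl : Finset V) (children : List (PJT V))

namespace PJT

def clauses : PJT V → Multiset (Clause V)
  | .leaf c => {c}
  | .node _ cs => (cs.attach.map (fun o => clauses o.1)).sum
decreasing_by
  have := List.sizeOf_lt_of_mem o.2
  simp only [PJT.node.sizeOf_spec]
  omega

def labels : PJT V → Multiset (Finset V)
  | .leaf _ => 0
  | .node lbl cs => lbl ::ₘ (cs.attach.map (fun o => labels o.1)).sum
decreasing_by
  have := List.sizeOf_lt_of_mem o.2
  simp only [PJT.node.sizeOf_spec]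
  omega

def P : PJT V → Finset V
  | .leaf _ => ∅
  | .node lbl cs => lbl ∪ (cs.attach.map (fun o => P o.1)).foldr (· ∪ ·) ∅
decreasing_by
  have := List.sizeOf_lt_of_mem o.2
  simp only [PJT.node.sizeOf_spec]
  omega

def varsOf : PJT V → Finset V
  | .leaf c => c.vars
  | .node lbl cs => (cs.attach.map (fun o => varsOf o.1)).foldr (· ∪ ·) ∅ \ lbl
decreasing_by
  have := List.sizeOf_lt_of_mem o.2
  simp only [PJT.node.sizeOf_spec]
  omega

def size : PJT V → ℕ
  | .leaf c => c.vars.card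
  | .node lbl cs => (varsOf (.node lbl cs) ∪ lbl).card

def width : PJT V → ℕ
  | .leaf c => c.vars.card
  | .node lbl cs =>
      max (size (.node lbl cs)) ((cs.attach.map (fun o => width o.1)).foldr max 0)
decreasing_by
  have := List.sizeOf_lt_of_mem o.2
  simp only [PJT.node.sizeOf_spec]
  omega

def wProd (W : V → Bool → ℝ) (S : Finset V) (τ : Finset V) : ℝ :=
  ∏ x ∈ S, W x (decide (x ∈ τ))

noncomputable def val (W : V → Bool → ℝ) : PJT V → Finset V → ℝ
  | .leaf c => c.ind
  | .node lbl cs => fun τ =>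
      ∑ σ ∈ lbl.powerset,
        (cs.attach.map (fun o => val W o.1 ((τ ∪ σ) ∩ varsOf o.1))).prod
          * wProd W lbl (τ ∪ σ)
decreasing_by
  have := List.sizeOf_lt_of_mem o.2
  simp only [PJT.node.sizeOf_spec]
  omega

inductive Subtree : PJT V → PJT V → Prop
  | refl (t : PJT V) : Subtree t t
  | child {s c : PJT V} {lbl : Finset V} {cs : List (PJT V)} :
      c ∈ cs → Subtree s c → Subtree s (.node lbl cs)

end PJT

def Formula.vars (φ : Finset (Clause V)) : Finset V := φ.sup Clause.vars

def clausesVars (M : Multiset (Clause V)) : Finset V := (M.map Clause.vars).sup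

structure IsPJT (φ : Finset (Clause V)) (t : PJT V) : Prop where
  clauses_eq : t.clauses = φ.val
  cover : t.P = Formula.vars φ
  disjoint_labels : (t.labels.map Finset.card).sum = (Formula.vars φ).card
  descend : ∀ lbl cs, PJT.Subtree (.node lbl cs) t →
    ∀ c ∈ φ, ∀ x ∈ lbl, x ∈ c.vars → c ∈ PJT.clauses (.node lbl cs)


/-- The subtree of a project-join tree at a position (a path of child indices). -/
def PJT.subAt {V : Type*} [DecidableEq V] : PJT V → List ℕ → Option (PJT V)
  | t, [] => some t
  | .leaf _, _ :: _ => none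
  | .node _ cs, i :: p =>
    match h : cs[i]? with
    | some c => PJT.subAt c p
    | none => none
termination_by t _ => sizeOf t
decreasing_by
  obtain ⟨hi, rfl⟩ := List.getElem?_eq_some_iff.mp h
  have := List.sizeOf_lt_of_mem (List.getElem_mem hi)
  simp only [PJT.node.sizeOf_spec]
  omega

/-- The bag of a node: `vars(n)` for a leaf, `vars(n) ∪ π(n)` for an internal node. -/
def PJT.bag {V : Type*} [DecidableEq V] : PJT V → Finset V
  | .leaf c => c.vars
  | .node lbl cs => PJT.varsOf (.node lbl cs) ∪ lbl

/-- The bag at a position of the tree, if the position is valid. -/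
def PJT.bagAt {V : Type*} [DecidableEq V] (t : PJT V) (p : List ℕ) :
    Option (Finset V) :=
  (t.subAt p).map PJT.bag

namespace PJTLemmas
open PJT
variable {V : Type*} [DecidableEq V]

theorem attach_map_eq {α : Type*} {β : Type*} (l : List α) (f : α → β) :
    l.attach.map (fun o => f o.1) = l.map f := by
  simp

theorem clauses_node (lbl : Finset V) (cs : List (PJT V)) :
    clauses (.node lbl cs) = (cs.map clauses).sum := by
  rw [clauses, attach_map_eq]

theorem labels_node (lbl : Finset V) (cs : List (PJT V)) :
    labels (.node lbl cs) = lbl ::ₘ (cs.map labels).sum := by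
  rw [labels, attach_map_eq]

theorem varsOf_node (lbl : Finset V) (cs : List (PJT V)) :
    varsOf (.node lbl cs) = (cs.map varsOf).foldr (· ∪ ·) ∅ \ lbl := by
  rw [varsOf, attach_map_eq]

theorem P_node (lbl : Finset V) (cs : List (PJT V)) :
    P (.node lbl cs) = lbl ∪ (cs.map P).foldr (· ∪ ·) ∅ := by
  rw [P, attach_map_eq]

theorem width_node (lbl : Finset V) (cs : List (PJT V)) :
    width (.node lbl cs) = max (size (.node lbl cs)) ((cs.map width).foldr max 0) := by
  rw [width, attach_map_eq]

theorem subAt_nil (t : PJT V) : t.subAt [] = some t := by rw [PJT.subAt.eq_1]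

theorem subAt_leaf_cons (c : Clause V) (i : ℕ) (p : List ℕ) :
    (PJT.leaf c).subAt (i :: p) = none := by rw [PJT.subAt.eq_2]

theorem subAt_node_cons {lbl : Finset V} {cs : List (PJT V)} {i : ℕ} {c : PJT V}
    (h : cs[i]? = some c) (p : List ℕ) :
    (PJT.node lbl cs).subAt (i :: p) = c.subAt p := by
  rw [PJT.subAt.eq_3]
  split <;> rename_i h' <;> rw [h'] at h <;> simp_all

theorem subAt_node_cons_none {lbl : Finset V} {cs : List (PJT V)} {i : ℕ}
    (h : cs[i]? = none) (p : List ℕ) :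
    (PJT.node lbl cs).subAt (i :: p) = none := by
  rw [PJT.subAt.eq_3]
  split <;> rename_i h' <;> rw [h'] at h <;> simp_all

theorem subAt_append (t : PJT V) (p q : List ℕ) :
    t.subAt (p ++ q) = (t.subAt p).bind (fun s => s.subAt q) := by
  induction p generalizing t with
  | nil => simp [subAt_nil]
  | cons i p ih =>
    cases t with
    | leaf c => simp [subAt_leaf_cons]
    | node lbl cs =>
      cases h : cs[i]? with
      | some c => simp [List.cons_append, subAt_node_cons h, ih]
      | none => simp [List.cons_append, subAt_node_cons_none h]

end PJTLemmas
namespace PJTLemmas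
open PJT
variable {V : Type*} [DecidableEq V]

theorem one_idx {α β : Type*} {l : List α} {i : ℕ} {a : α} (f : α → Multiset β)
    (h : l[i]? = some a) : f a ≤ (l.map f).sum := by
  induction l generalizing i with
  | nil => simp at h
  | cons z l ih =>
    cases i with
    | zero => simp at h; subst h; simp [List.map_cons]
    | succ i =>
      simp only [List.getElem?_cons_succ] at h
      calc f a ≤ (l.map f).sum := ih h
        _ ≤ f z + (l.map f).sum := le_add_self
        _ = ((z :: l).map f).sum := by simp

theorem two_idx {α β : Type*} {l : List α} {i j : ℕ} {a b : α} (f : α → Multiset β)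
    (hij : i ≠ j) (ha : l[i]? = some a) (hb : l[j]? = some b) :
    f a + f b ≤ (l.map f).sum := by
  induction l generalizing i j with
  | nil => simp at ha
  | cons z l ih =>
    cases i with
    | zero =>
      simp at ha
      cases j with
      | zero => exact absurd rfl hij
      | succ j =>
        simp only [List.getElem?_cons_succ] at hb
        simp only [List.map_cons, List.sum_cons]
        rw [← ha]
        exact add_le_add_right (one_idx f hb) (f z)
    | succ i =>
      simp only [List.getElem?_cons_succ] at ha
      cases j with
      | zero =>
        simp at hb
        simp only [List.map_cons, List.sum_cons]
        rw [← hb, add_comm (f a)]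
        exact add_le_add_right (one_idx f ha) (f z)
      | succ j =>
        simp only [List.getElem?_cons_succ] at hb
        calc f a + f b ≤ (l.map f).sum := ih (by omega) ha hb
          _ ≤ f z + (l.map f).sum := le_add_self
          _ = ((z :: l).map f).sum := by simp

theorem mem_foldr_union {l : List (Finset V)} {x : V} :
    x ∈ l.foldr (· ∪ ·) ∅ ↔ ∃ s ∈ l, x ∈ s := by
  induction l with
  | nil => simp
  | cons z l ih => simp [ih]

theorem exists_idx_of_mem_foldr_union {l : List (Finset V)} {x : V}
    (h : x ∈ l.foldr (· ∪ ·) ∅) : ∃ (i : ℕ) (s : Finset V), l[i]? = some s ∧ x ∈ s := by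
  obtain ⟨s, hs, hx⟩ := mem_foldr_union.mp h
  obtain ⟨i, hi, rfl⟩ := List.mem_iff_getElem.mp hs
  exact ⟨i, l[i], List.getElem?_eq_getElem hi, hx⟩

theorem le_foldr_max {l : List ℕ} {a : ℕ} (h : a ∈ l) : a ≤ l.foldr max 0 := by
  induction l with
  | nil => simp at h
  | cons z l ih =>
    rcases List.mem_cons.mp h with rfl | h
    · simp only [List.foldr_cons]; omega
    · have := ih h; simp only [List.foldr_cons]; omega

theorem foldr_max_mem (l : List ℕ) : l.foldr max 0 = 0 ∨ l.foldr max 0 ∈ l := by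
  induction l with
  | nil => simp
  | cons z l ih =>
    simp only [List.foldr_cons]
    rcases Nat.le_total z (l.foldr max 0) with h | h
    · rcases ih with h0 | hm
      · left; omega
      · right; rw [max_eq_right h]; exact List.mem_cons_of_mem _ hm
    · right; rw [max_eq_left h]; exact List.mem_cons_self

end PJTLemmas
namespace PJTLemmas
open PJT
variable {V : Type*} [DecidableEq V]

def headLbl : PJT V → Finset V
  | .leaf _ => ∅
  | .node lbl _ => lbl

theorem bag_eq (s : PJT V) : s.bag = s.varsOf ∪ headLbl s := by
  cases s with
  | leaf c => simp [PJT.bag, headLbl, varsOf]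
  | node lbl cs => rfl

theorem clauses_child {lbl : Finset V} {cs : List (PJT V)} {i : ℕ} {c : PJT V}
    (h : cs[i]? = some c) : clauses c ≤ clauses (.node lbl cs) := by
  rw [clauses_node]; exact one_idx clauses h

theorem labels_child {lbl : Finset V} {cs : List (PJT V)} {i : ℕ} {c : PJT V}
    (h : cs[i]? = some c) : labels c ≤ labels (.node lbl cs) := by
  rw [labels_node]
  exact le_trans (one_idx labels h) (Multiset.le_cons_self _ _)

theorem clauses_le_subAt {s s' : PJT V} {p : List ℕ} (h : s.subAt p = some s') :
    clauses s' ≤ clauses s := by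
  induction p generalizing s with
  | nil => rw [subAt_nil] at h; cases h; exact le_refl _
  | cons i p ih =>
    cases s with
    | leaf c => rw [subAt_leaf_cons] at h; cases h
    | node lbl cs =>
      cases hc : cs[i]? with
      | some c =>
        rw [subAt_node_cons hc] at h
        exact le_trans (ih h) (clauses_child hc)
      | none => rw [subAt_node_cons_none hc] at h; cases h

theorem labels_le_subAt {s s' : PJT V} {p : List ℕ} (h : s.subAt p = some s') :
    labels s' ≤ labels s := by
  induction p generalizing s with
  | nil => rw [subAt_nil] at h; cases h; exact le_refl _
  | cons i p ih =>
    cases s with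
    | leaf c => rw [subAt_leaf_cons] at h; cases h
    | node lbl cs =>
      cases hc : cs[i]? with
      | some c =>
        rw [subAt_node_cons hc] at h
        exact le_trans (ih h) (labels_child hc)
      | none => rw [subAt_node_cons_none hc] at h; cases h

theorem labels_le_csum {lbl : Finset V} {cs : List (PJT V)} {s' : PJT V}
    {i : ℕ} {p : List ℕ} (h : (PJT.node lbl cs).subAt (i :: p) = some s') :
    labels s' ≤ (cs.map labels).sum := by
  cases hc : cs[i]? with
  | some c =>
    rw [subAt_node_cons hc] at h
    exact le_trans (labels_le_subAt h) (one_idx labels hc)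
  | none => rw [subAt_node_cons_none hc] at h; cases h

theorem subtree_of_subAt {t s : PJT V} {p : List ℕ} (h : t.subAt p = some s) :
    PJT.Subtree s t := by
  induction p generalizing t with
  | nil => rw [subAt_nil] at h; cases h; exact Subtree.refl _
  | cons i p ih =>
    cases t with
    | leaf c => rw [subAt_leaf_cons] at h; cases h
    | node lbl cs =>
      cases hc : cs[i]? with
      | some c =>
        rw [subAt_node_cons hc] at h
        obtain ⟨hi, rfl⟩ := List.getElem?_eq_some_iff.mp hc
        exact Subtree.child (List.getElem_mem hi) (ih h)
      | none => rw [subAt_node_cons_none hc] at h; cases h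

/-- Two subtrees at diverging positions have (multiset-)disjoint occurrences. -/
theorem subAdd {β : Type*} (g : PJT V → Multiset β)
    (hch : ∀ (lbl : Finset V) (cs : List (PJT V)) (i : ℕ) (c : PJT V),
      cs[i]? = some c → g c ≤ g (.node lbl cs))
    (htwo : ∀ (lbl : Finset V) (cs : List (PJT V)) (i j : ℕ) (a b : PJT V),
      i ≠ j → cs[i]? = some a → cs[j]? = some b → g a + g b ≤ g (.node lbl cs))
    (hle : ∀ {s s' : PJT V} {p : List ℕ}, s.subAt p = some s' → g s' ≤ g s) :
    ∀ (p1 p2 : List ℕ) (t s1 s2 : PJT V), t.subAt p1 = some s1 →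
      t.subAt p2 = some s2 → ¬ p1 <+: p2 → ¬ p2 <+: p1 → g s1 + g s2 ≤ g t := by
  intro p1
  induction p1 with
  | nil => intro p2 t s1 s2 _ _ h12 _; exact absurd (List.nil_prefix) h12
  | cons i p1 ih =>
    rintro (_ | ⟨j, p2⟩) t s1 s2 h1 h2 h12 h21
    · exact absurd (List.nil_prefix) h21
    cases t with
    | leaf c => rw [subAt_leaf_cons] at h1; cases h1
    | node lbl cs =>
      by_cases hij : i = j
      · subst hij
        cases hc : cs[i]? with
        | some c =>
          rw [subAt_node_cons hc] at h1 h2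
          refine le_trans (ih p2 c s1 s2 h1 h2 ?_ ?_) (hch lbl cs i c hc)
          · intro hpre; exact h12 (List.cons_prefix_cons.mpr ⟨rfl, hpre⟩)
          · intro hpre; exact h21 (List.cons_prefix_cons.mpr ⟨rfl, hpre⟩)
        | none => rw [subAt_node_cons_none hc] at h1; cases h1
      · cases hci : cs[i]? with
        | some a =>
          cases hcj : cs[j]? with
          | some b =>
            rw [subAt_node_cons hci] at h1
            rw [subAt_node_cons hcj] at h2
            exact le_trans (add_le_add (hle h1) (hle h2))
              (htwo lbl cs i j a b hij hci hcj)
          | none => rw [subAt_node_cons_none hcj] at h2; cases h2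
        | none => rw [subAt_node_cons_none hci] at h1; cases h1

end PJTLemmas
namespace PJTLemmas
open PJT
variable {V : Type*} [DecidableEq V]

theorem varsOf_clause : ∀ (s : PJT V) (x : V), x ∈ s.varsOf →
    ∃ c ∈ s.clauses, x ∈ c.vars
  | .leaf c, x, hx => by
    rw [varsOf] at hx
    exact ⟨c, by rw [clauses]; simp, hx⟩
  | .node lbl cs, x, hx => by
    rw [varsOf_node] at hx
    obtain ⟨hx1, _⟩ := Finset.mem_sdiff.mp hx
    obtain ⟨A, hA, hxA⟩ := mem_foldr_union.mp hx1
    obtain ⟨c, hc, rfl⟩ := List.mem_map.mp hA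
    obtain ⟨cl, hcl, hxcl⟩ := varsOf_clause c x hxA
    obtain ⟨i, hi, rfl⟩ := List.mem_iff_getElem.mp hc
    exact ⟨cl, Multiset.mem_of_le (clauses_child (List.getElem?_eq_getElem hi)) hcl, hxcl⟩
decreasing_by
  have := List.sizeOf_lt_of_mem hc
  simp only [PJT.node.sizeOf_spec]
  omega

theorem sup_list_sum (ms : List (Multiset (Finset V))) :
    ms.sum.sup = (ms.map Multiset.sup).foldr (· ∪ ·) ∅ := by
  induction ms with
  | nil => simp
  | cons z ms ih =>
    simp only [List.sum_cons, List.map_cons, List.foldr_cons, Multiset.sup_add, ih]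
    rw [Finset.sup_eq_union]

theorem P_eq_sup : ∀ s : PJT V, s.P = s.labels.sup
  | .leaf c => by rw [PJT.P, PJT.labels]; simp
  | .node lbl cs => by
    rw [P_node, labels_node, Multiset.sup_cons, sup_list_sum, Finset.sup_eq_union,
      List.map_map]
    congr 1
    refine congrArg _ (List.map_congr_left ?_)
    intro c hc
    simp only [Function.comp_apply]
    exact P_eq_sup c
decreasing_by
  have := List.sizeOf_lt_of_mem hc
  simp only [PJT.node.sizeOf_spec]
  omega

theorem bag_card_le_width {p : List ℕ} : ∀ {s s' : PJT V}, s.subAt p = some s' →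
    s'.bag.card ≤ s.width := by
  induction p with
  | nil =>
    intro s s' h
    rw [subAt_nil] at h; cases h
    cases s with
    | leaf c => simp [PJT.bag, PJT.width]
    | node lbl cs =>
      rw [width_node]
      exact le_trans (le_of_eq (by simp [PJT.bag, PJT.size])) (le_max_left _ _)
  | cons i p ih =>
    intro s s' h
    cases s with
    | leaf c => rw [subAt_leaf_cons] at h; cases h
    | node lbl cs =>
      cases hc : cs[i]? with
      | some c =>
        rw [subAt_node_cons hc] at h
        refine le_trans (ih h) (le_trans ?_ (le_of_eq (width_node lbl cs).symm))
        refine le_trans ?_ (le_max_right _ _)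
        obtain ⟨hi, rfl⟩ := List.getElem?_eq_some_iff.mp hc
        exact le_foldr_max (List.mem_map_of_mem (List.getElem_mem hi))
      | none => rw [subAt_node_cons_none hc] at h; cases h

theorem exists_bag_card_eq_width : ∀ s : PJT V,
    ∃ p s', s.subAt p = some s' ∧ s'.bag.card = s.width
  | .leaf c => ⟨[], .leaf c, subAt_nil _, by simp [PJT.bag, PJT.width]⟩
  | .node lbl cs => by
    by_cases hle : (cs.map width).foldr max 0 ≤ size (.node lbl cs)
    · refine ⟨[], .node lbl cs, subAt_nil _, ?_⟩
      rw [width_node, max_eq_left hle]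
      simp [PJT.bag, PJT.size]
    · rcases foldr_max_mem (cs.map width) with h0 | hm
      · omega
      · obtain ⟨c, hc, hwc⟩ := List.mem_map.mp hm
        obtain ⟨p, s', hs', hcard⟩ := exists_bag_card_eq_width c
        obtain ⟨i, hi, rfl⟩ := List.mem_iff_getElem.mp hc
        refine ⟨i :: p, s', ?_, ?_⟩
        · rw [subAt_node_cons (List.getElem?_eq_getElem hi)]; exact hs'
        · rw [width_node, max_eq_right (le_of_not_ge hle), hcard, hwc]
decreasing_by
  have := List.sizeOf_lt_of_mem hc
  simp only [PJT.node.sizeOf_spec]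
  omega

theorem sup_card_le_sum (M : Multiset (Finset V)) :
    M.sup.card ≤ (M.map Finset.card).sum := by
  induction M using Multiset.induction_on with
  | empty => simp
  | cons A M ih =>
    rw [Multiset.sup_cons, Multiset.map_cons, Multiset.sum_cons]
    calc (A ⊔ M.sup).card ≤ A.card + M.sup.card := by
          rw [Finset.sup_eq_union]; exact Finset.card_union_le _ _
      _ ≤ A.card + (M.map Finset.card).sum := by omega

theorem countP_le_one (M : Multiset (Finset V))
    (h : (M.map Finset.card).sum = M.sup.card) (x : V) :
    M.countP (fun A => x ∈ A) ≤ 1 := by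
  induction M using Multiset.induction_on with
  | empty => simp
  | cons A M ih =>
    rw [Multiset.sup_cons, Multiset.map_cons, Multiset.sum_cons] at h
    have h1 : M.sup.card ≤ (M.map Finset.card).sum := sup_card_le_sum M
    have h2 : (A ⊔ M.sup).card + (A ⊓ M.sup).card = A.card + M.sup.card := by
      rw [Finset.sup_eq_union, Finset.inf_eq_inter]
      exact Finset.card_union_add_card_inter _ _
    have h3 : (A ⊔ M.sup).card ≤ A.card + M.sup.card := by omega
    have hMeq : (M.map Finset.card).sum = M.sup.card := by omega
    have hdisj : (A ⊓ M.sup).card = 0 := by omega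
    rw [Multiset.countP_cons]
    by_cases hxA : x ∈ A
    · have hz : M.countP (fun A => x ∈ A) = 0 := by
        rw [Multiset.countP_eq_zero]
        intro B hB hxB
        have : x ∈ A ⊓ M.sup := by
          rw [Finset.inf_eq_inter, Finset.mem_inter]
          exact ⟨hxA, (Multiset.le_sup hB : B ≤ M.sup) hxB⟩
        have := Finset.card_pos.mpr ⟨x, this⟩
        omega
      simp [hz, hxA]
    · simpa [hxA] using ih hMeq

end PJTLemmas
namespace PJTLemmas
open PJT
variable {V : Type*} [DecidableEq V]

theorem mem_list_sum {β : Type*} {l : List (Multiset β)} {c : β} :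
    c ∈ l.sum ↔ ∃ M ∈ l, c ∈ M := by
  induction l with
  | nil => simp
  | cons z l ih => simp [Multiset.mem_add, ih]

/-- Every clause of the tree sits at a leaf position. -/
theorem leaf_pos : ∀ (s : PJT V) (c : Clause V), c ∈ s.clauses →
    ∃ p, s.subAt p = some (.leaf c)
  | .leaf c', c, hc => by
    rw [clauses] at hc
    simp at hc
    exact ⟨[], by rw [hc, subAt_nil]⟩
  | .node lbl cs, c, hc => by
    rw [clauses_node] at hc
    obtain ⟨M, hM, hcM⟩ := mem_list_sum.mp hc
    obtain ⟨o, ho, rfl⟩ := List.mem_map.mp hM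
    obtain ⟨p, hp⟩ := leaf_pos o c hcM
    obtain ⟨i, hi, rfl⟩ := List.mem_iff_getElem.mp ho
    exact ⟨i :: p, by rw [subAt_node_cons (List.getElem?_eq_getElem hi)]; exact hp⟩
termination_by s _ _ => sizeOf s
decreasing_by
  have := List.sizeOf_lt_of_mem ho
  simp only [PJT.node.sizeOf_spec]
  omega

/-- Every projected variable sits in the label of some node position. -/
theorem exists_label_pos : ∀ (s : PJT V) (x : V), x ∈ s.P →
    ∃ q lbl cs, s.subAt q = some (.node lbl cs) ∧ x ∈ lbl
  | .leaf c, x, hx => by rw [PJT.P] at hx; simp at hx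
  | .node lbl cs, x, hx => by
    rw [P_node] at hx
    rcases Finset.mem_union.mp hx with hx | hx
    · exact ⟨[], lbl, cs, subAt_nil _, hx⟩
    · obtain ⟨A, hA, hxA⟩ := mem_foldr_union.mp hx
      obtain ⟨o, ho, rfl⟩ := List.mem_map.mp hA
      obtain ⟨q, lbl', cs', hq, hx'⟩ := exists_label_pos o x hxA
      obtain ⟨i, hi, rfl⟩ := List.mem_iff_getElem.mp ho
      exact ⟨i :: q, lbl', cs',
        by rw [subAt_node_cons (List.getElem?_eq_getElem hi)]; exact hq, hx'⟩
termination_by s _ _ => sizeOf s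
decreasing_by
  have := List.sizeOf_lt_of_mem ho
  simp only [PJT.node.sizeOf_spec]
  omega

theorem bag_node (lbl : Finset V) (cs : List (PJT V)) :
    PJT.bag (.node lbl cs) = (cs.map varsOf).foldr (· ∪ ·) ∅ ∪ lbl := by
  show varsOf (.node lbl cs) ∪ lbl = _
  rw [varsOf_node, Finset.sdiff_union_self_eq_union]

theorem varsOf_child_subset_bag {lbl : Finset V} {cs : List (PJT V)} {c : PJT V}
    (hc : c ∈ cs) : c.varsOf ⊆ PJT.bag (.node lbl cs) := by
  rw [bag_node]
  intro x hx
  exact Finset.mem_union_left _ (mem_foldr_union.mpr ⟨c.varsOf, List.mem_map_of_mem hc, hx⟩)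

theorem headLbl_label {s : PJT V} {x : V} (hx : x ∈ headLbl s) :
    ∃ lbl cs, s = PJT.node lbl cs ∧ x ∈ lbl := by
  cases s with
  | leaf c => simp [headLbl] at hx
  | node lbl cs => exact ⟨lbl, cs, rfl, hx⟩

theorem mem_labels_self (lbl : Finset V) (cs : List (PJT V)) :
    lbl ∈ labels (PJT.node lbl cs) := by
  rw [labels_node]; exact Multiset.mem_cons_self _ _

/-- The key descent lemma: a variable projected at a descendant node cannot
appear in `varsOf` of an ancestor. -/
theorem desc {t : PJT V} {x : V} {lblm : Finset V} {csm : List (PJT V)}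
    (hnodup : t.clauses.Nodup)
    (hdesc : ∀ c : Clause V, c ∈ t.clauses → x ∈ c.vars →
      c ∈ clauses (.node lblm csm))
    (hxm : x ∈ lblm) :
    ∀ (d : List ℕ) (a : PJT V), a.clauses ≤ t.clauses →
      a.subAt d = some (.node lblm csm) → x ∈ a.varsOf → False := by
  intro d
  induction d with
  | nil =>
    intro a ha hsub hx
    rw [subAt_nil] at hsub; cases hsub
    rw [varsOf_node] at hx
    exact (Finset.mem_sdiff.mp hx).2 hxm
  | cons j d ih =>
    intro a ha hsub hx
    cases a with
    | leaf c => rw [subAt_leaf_cons] at hsub; cases hsub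
    | node lbl cs =>
      cases hcj : cs[j]? with
      | some cj =>
        rw [subAt_node_cons hcj] at hsub
        rw [varsOf_node] at hx
        obtain ⟨i, A, hiA, hxA⟩ :=
          exists_idx_of_mem_foldr_union (Finset.mem_sdiff.mp hx).1
        rw [List.getElem?_map] at hiA
        cases hci : cs[i]? with
        | none => rw [hci] at hiA; cases hiA
        | some ci =>
          rw [hci, Option.map_some] at hiA
          obtain rfl : varsOf ci = A := Option.some.inj hiA
          by_cases hij : i = j
          · subst hij
            rw [hci] at hcj
            have hee : ci = cj := Option.some.inj hcj
            subst hee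
            exact ih ci (le_trans (clauses_child hci) ha) hsub hxA
          · obtain ⟨cl, hcl, hxcl⟩ := varsOf_clause ci x hxA
            have hclt : cl ∈ t.clauses :=
              Multiset.mem_of_le (le_trans (clauses_child hci) ha) hcl
            have hclm : cl ∈ clauses cj :=
              Multiset.mem_of_le (clauses_le_subAt hsub) (hdesc cl hclt hxcl)
            have h2 : clauses ci + clauses cj ≤ t.clauses := by
              refine le_trans ?_ ha
              rw [clauses_node]
              exact two_idx clauses hij hci hcj
            have hnd : (clauses ci + clauses cj).Nodup :=
              Multiset.nodup_of_le h2 hnodup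
            exact Multiset.disjoint_left.mp (Multiset.nodup_add.mp hnd).2.2 hcl hclm
      | none => rw [subAt_node_cons_none hcj] at hsub; cases hsub

end PJTLemmas

open PJTLemmas

/-- A project-join tree of width `w` yields a tree decomposition of the Gaifman
graph of `φ` of treewidth `w - 1`, with bags `χ(n) = vars(n)` at leaves and
`χ(n) = vars(n) ∪ π(n)` at internal nodes: (i) every variable of `φ` is in some
bag; (ii) both endpoints of every Gaifman edge (two variables sharing a clause)
lie in a common bag; (iii) for each variable, the nodes whose bags contain it
form a connected subtree; (iv) every bag has at most `w` elements and some bag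
has exactly `w` elements. -/
theorem pjt_to_tree_decomposition {V : Type*} [DecidableEq V]
    (φ : Finset (Clause V)) (t : PJT V) (h : IsPJT φ t) :
    -- (i) vertex coverage
    (∀ x ∈ Formula.vars φ, ∃ p b, t.bagAt p = some b ∧ x ∈ b) ∧
    -- (ii) edge coverage of the Gaifman graph
    (∀ x y : V, x ≠ y → (∃ c ∈ φ, x ∈ c.vars ∧ y ∈ c.vars) →
      ∃ p b, t.bagAt p = some b ∧ x ∈ b ∧ y ∈ b) ∧
    -- (iii) running intersection: the positions containing a variable form a
    -- connected subtree (closed under taking ancestors down to a common top)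
    (∀ x : V, (∃ p b, t.bagAt p = some b ∧ x ∈ b) →
      ∃ top : List ℕ, ∀ p b, t.bagAt p = some b → x ∈ b →
        top <+: p ∧ ∀ m, top <+: m → m <+: p →
          ∃ b', t.bagAt m = some b' ∧ x ∈ b') ∧
    -- (iv) the treewidth is width(T) - 1: max bag size equals width(T)
    (∀ p b, t.bagAt p = some b → b.card ≤ t.width) ∧
    (∃ p b, t.bagAt p = some b ∧ b.card = t.width) := by
  
  have hnodup : t.clauses.Nodup := by rw [h.clauses_eq]; exact φ.nodup
  have hcp : ∀ x : V, (t.labels).countP (fun A => x ∈ A) ≤ 1 := by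
    intro x
    refine countP_le_one _ ?_ x
    rw [← P_eq_sup, h.cover]
    exact h.disjoint_labels
  have lab2 : ∀ (x : V) (M1 M2 : Multiset (Finset V)), M1 + M2 ≤ t.labels →
      (∃ A ∈ M1, x ∈ A) → (∃ B ∈ M2, x ∈ B) → False := by
    rintro x M1 M2 hle ⟨A, hA, hxA⟩ ⟨B, hB, hxB⟩
    have c1 : 0 < M1.countP (fun A => x ∈ A) := Multiset.countP_pos.mpr ⟨A, hA, hxA⟩
    have c2 : 0 < M2.countP (fun A => x ∈ A) := Multiset.countP_pos.mpr ⟨B, hB, hxB⟩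
    have c3 := Multiset.countP_le_of_le (fun A => x ∈ A) hle
    rw [Multiset.countP_add] at c3
    have := hcp x
    omega
  have cl2 : ∀ (M1 M2 : Multiset (Clause V)), M1 + M2 ≤ t.clauses →
      ∀ c, c ∈ M1 → c ∈ M2 → False := by
    intro M1 M2 hle c h1 h2
    have hnd : (M1 + M2).Nodup := Multiset.nodup_of_le hle hnodup
    exact Multiset.disjoint_left.mp (Multiset.nodup_add.mp hnd).2.2 h1 h2
  have subadd_cl := subAdd (V := V) PJT.clauses
    (fun lbl cs i c hc => clauses_child hc)
    (fun lbl cs i j a b hij ha hb => by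
      rw [clauses_node]; exact two_idx PJT.clauses hij ha hb)
    (fun {s s' p} hss => clauses_le_subAt hss)
  have subadd_lab := subAdd (V := V) PJT.labels
    (fun lbl cs i c hc => labels_child hc)
    (fun lbl cs i j a b hij ha hb => by
      rw [labels_node]
      exact le_trans (two_idx PJT.labels hij ha hb) (Multiset.le_cons_self _ _))
    (fun {s s' p} hss => labels_le_subAt hss)
  have cover2 : ∀ c ∈ φ, ∃ p, t.bagAt p = some c.vars := by
    intro c hc
    obtain ⟨p, hp⟩ := leaf_pos t c (by rw [h.clauses_eq]; exact hc)
    exact ⟨p, by simp [PJT.bagAt, hp, PJT.bag]⟩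
  refine ⟨?_, ?_, ?_, ?_, ?_⟩
  · -- (i)
    intro x hx
    rw [Formula.vars] at hx
    obtain ⟨c, hc, hxc⟩ := Finset.mem_sup.mp hx
    obtain ⟨p, hp⟩ := cover2 c hc
    exact ⟨p, c.vars, hp, hxc⟩
  · -- (ii)
    rintro x y _ ⟨c, hc, hxc, hyc⟩
    obtain ⟨p, hp⟩ := cover2 c hc
    exact ⟨p, c.vars, hp, hxc, hyc⟩
  · -- (iii)
    intro x hx
    have hxvars : x ∈ Formula.vars φ := by
      obtain ⟨p, b, hb, hxb⟩ := hx
      obtain ⟨s', hs', rfl⟩ := Option.map_eq_some_iff.mp hb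
      rw [bag_eq] at hxb
      rcases Finset.mem_union.mp hxb with hv | hl
      · obtain ⟨c, hc, hxc⟩ := varsOf_clause s' x hv
        have hct : c ∈ t.clauses := Multiset.mem_of_le (clauses_le_subAt hs') hc
        rw [h.clauses_eq] at hct
        rw [Formula.vars]
        exact Finset.mem_sup.mpr ⟨c, hct, hxc⟩
      · obtain ⟨lbl', cs', rfl, hxl⟩ := headLbl_label hl
        have h1 : lbl' ∈ t.labels :=
          Multiset.mem_of_le (labels_le_subAt hs') (mem_labels_self _ _)
        have h2 : lbl' ≤ t.labels.sup := Multiset.le_sup h1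
        rw [← P_eq_sup, h.cover] at h2
        exact h2 hxl
    obtain ⟨q, lblm, csm, hq, hxm⟩ :=
      exists_label_pos t x (by rw [h.cover]; exact hxvars)
    have hdesc' : ∀ c : Clause V, c ∈ t.clauses → x ∈ c.vars →
        c ∈ PJT.clauses (.node lblm csm) := by
      intro c hc hxc
      rw [h.clauses_eq] at hc
      exact h.descend lblm csm (subtree_of_subAt hq) c hc x hxm hxc
    refine ⟨q, ?_⟩
    intro p b hb hxb
    obtain ⟨sp, hsp, rfl⟩ := Option.map_eq_some_iff.mp hb
    have hApre : q <+: p := by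
      by_cases hqp : q <+: p
      · exact hqp
      exfalso
      by_cases hpq : p <+: q
      · -- p is a strict prefix of q
        obtain ⟨d, rfl⟩ := hpq
        rw [subAt_append, hsp, Option.bind_some] at hq
        cases d with
        | nil => simp at hqp
        | cons j d =>
          cases sp with
          | leaf c => rw [subAt_leaf_cons] at hq; cases hq
          | node lbl cs =>
            rw [bag_eq] at hxb
            rcases Finset.mem_union.mp hxb with hv | hl
            · exact desc hnodup hdesc' hxm (j :: d) _ (clauses_le_subAt hsp) hq
                hv
            · have hle : lbl ::ₘ PJT.labels (.node lblm csm) ≤ t.labels := by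
                refine le_trans ?_ (labels_le_subAt hsp)
                rw [labels_node lbl cs]
                exact Multiset.cons_le_cons _ (labels_le_csum hq)
              exact lab2 x {lbl} (PJT.labels (.node lblm csm))
                (by rw [Multiset.singleton_add]; exact hle)
                ⟨lbl, Multiset.mem_singleton_self _, by
                  rw [headLbl] at hl; exact hl⟩
                ⟨lblm, mem_labels_self _ _, hxm⟩
      · -- diverging positions
        rw [bag_eq] at hxb
        rcases Finset.mem_union.mp hxb with hv | hl
        · obtain ⟨c, hc, hxc⟩ := varsOf_clause sp x hv
          have hct : c ∈ t.clauses := Multiset.mem_of_le (clauses_le_subAt hsp) hc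
          have hcm : c ∈ PJT.clauses (.node lblm csm) := hdesc' c hct hxc
          exact cl2 _ _ (subadd_cl p q t sp _ hsp hq hpq hqp) c hc hcm
        · obtain ⟨lbl', cs', rfl, hxl⟩ := headLbl_label hl
          exact lab2 x _ _ (subadd_lab p q t _ _ hsp hq hpq hqp)
            ⟨lbl', mem_labels_self _ _, hxl⟩
            ⟨lblm, mem_labels_self _ _, hxm⟩
    refine ⟨hApre, ?_⟩
    intro m' hqm' hm'p
    obtain ⟨e, rfl⟩ := hm'p
    rw [subAt_append] at hsp
    cases hsm : t.subAt m' with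
    | none => rw [hsm] at hsp; cases hsp
    | some sm =>
      rw [hsm, Option.bind_some] at hsp
      refine ⟨sm.bag, by rw [PJT.bagAt, hsm]; rfl, ?_⟩
      by_cases hm'q : m' = q
      · subst hm'q
        rw [hq] at hsm
        cases hsm
        rw [bag_eq]
        exact Finset.mem_union_right _ (by rw [headLbl]; exact hxm)
      · obtain ⟨d, rfl⟩ := hqm'
        cases d with
        | nil => simp at hm'q
        | cons j r =>
          rw [subAt_append, hq, Option.bind_some] at hsm
          have hlab : PJT.labels sm ≤ (csm.map PJT.labels).sum := labels_le_csum hsm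
          have up2 : ∀ (e : List ℕ) (s s' : PJT V),
              PJT.labels s ≤ (csm.map PJT.labels).sum →
              s.subAt e = some s' → x ∈ s'.bag → x ∈ s.bag := by
            intro e
            induction e with
            | nil =>
              intro s s' _ h2 h3
              rw [subAt_nil] at h2; cases h2; exact h3
            | cons j' e ih =>
              intro s s' h1 h2 h3
              cases s with
              | leaf c => rw [subAt_leaf_cons] at h2; cases h2
              | node lbl cs =>
                cases hcj : cs[j']? with
                | some cj =>
                  rw [subAt_node_cons hcj] at h2
                  have hlcj : PJT.labels cj ≤ (csm.map PJT.labels).sum := by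
                    refine le_trans (one_idx PJT.labels hcj)
                      (le_trans (Multiset.le_cons_self _ lbl) ?_)
                    rw [← labels_node lbl cs]
                    exact h1
                  have hbagcj : x ∈ cj.bag := ih cj s' hlcj h2 h3
                  rw [bag_eq] at hbagcj
                  rcases Finset.mem_union.mp hbagcj with hv | hl
                  · obtain ⟨hj, rfl⟩ := List.getElem?_eq_some_iff.mp hcj
                    exact varsOf_child_subset_bag (List.getElem_mem hj) hv
                  · exfalso
                    obtain ⟨lbl', cs', heq, hxl⟩ := headLbl_label hl
                    have hle2 : lblm ::ₘ PJT.labels cj ≤ t.labels := by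
                      refine le_trans (Multiset.cons_le_cons _ hlcj) ?_
                      rw [← labels_node lblm csm]
                      exact labels_le_subAt hq
                    exact lab2 x {lblm} (PJT.labels cj)
                      (by rw [Multiset.singleton_add]; exact hle2)
                      ⟨lblm, Multiset.mem_singleton_self _, hxm⟩
                      ⟨lbl', by rw [heq]; exact mem_labels_self _ _, hxl⟩
                | none => rw [subAt_node_cons_none hcj] at h2; cases h2
          exact up2 e sm sp hlab hsp hxb
  · -- (iv) upper bound
    intro p b hb
    obtain ⟨s', hs', rfl⟩ := Option.map_eq_some_iff.mp hb
    exact bag_card_le_width hs'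
  · -- (iv) attained
    obtain ⟨p, s', hs', hc⟩ := exists_bag_card_eq_width t
    exact ⟨p, s'.bag, by rw [PJT.bagAt, hs']; rfl, hc⟩
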